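/- Fix an integer m ≥ 2 and let ρ_λ (λ ∈ ℂ) be the ℂ-algebra automorphism of ℂ[x,y,z,s,t,u,v] with ρ_λ(x) = x, ρ_λ(y) = y, ρ_λ(z) = z, ρ_λ(s) = s + λx^{m+1}, ρ_λ(t) = t + λy^{m+1}, ρ_λ(u) = u + λz^{m+1}, ρ_λ(v) = v + λx^m y^m z^m. If f ∈ ℂ[x,y,z,s,t,u,v] satisfies ρ_λ(f) = f for all λ ∈ ℂ, then the polynomial obtained from f by substituting x = y = z = 0 is constant; equivalently, every non-constant monomial occurring in f is divisible by x, y, or z. -/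

import Mathlib

open MvPolynomial

/-- The comorphism `ρ_λ` of the additive group action on `ℂ⁷` (Roberts/Section 4):
`x ↦ x`, `y ↦ y`, `z ↦ z`, `s ↦ s + λx^{m+1}`, `t ↦ t + λy^{m+1}`,
`u ↦ u + λz^{m+1}`, `v ↦ v + λx^m y^m z^m`
(variables `X 0 = x`, `X 1 = y`, `X 2 = z`, `X 3 = s`, `X 4 = t`, `X 5 = u`, `X 6 = v`). -/
noncomputable def robertsRho (m : ℕ) (l : ℂ) :
    MvPolynomial (Fin 7) ℂ →ₐ[ℂ] MvPolynomial (Fin 7) ℂ :=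
  aeval ![X 0, X 1, X 2,
          X 3 + C l * X 0 ^ (m + 1),
          X 4 + C l * X 1 ^ (m + 1),
          X 5 + C l * X 2 ^ (m + 1),
          X 6 + C l * X 0 ^ m * X 1 ^ m * X 2 ^ m]

set_option maxHeartbeats 1000000

namespace RobertsAux

lemma vec7_five {α : Type*} (a b c d e f g : α) : ![a,b,c,d,e,f,g] (5 : Fin 7) = f := rfl
lemma vec7_six {α : Type*} (a b c d e f g : α) : ![a,b,c,d,e,f,g] (6 : Fin 7) = g := rfl

abbrev P7 := MvPolynomial (Fin 7) ℂ

/-- The "universal" version of `robertsRho`, with the parameter `λ` replaced by a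
polynomial variable. -/
noncomputable def Phi (m : ℕ) : P7 →ₐ[ℂ] Polynomial P7 :=
  aeval ![Polynomial.C (X 0), Polynomial.C (X 1), Polynomial.C (X 2),
    Polynomial.C (X 3) + Polynomial.X * Polynomial.C (X 0 ^ (m + 1)),
    Polynomial.C (X 4) + Polynomial.X * Polynomial.C (X 1 ^ (m + 1)),
    Polynomial.C (X 5) + Polynomial.X * Polynomial.C (X 2 ^ (m + 1)),
    Polynomial.C (X 6) + Polynomial.X * Polynomial.C (X 0 ^ m * X 1 ^ m * X 2 ^ m)]

lemma eval_Phi (m : ℕ) (l : ℂ) (p : P7) :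
    (Phi m p).eval (C l) = robertsRho m l p := by
  have h : (Polynomial.evalRingHom (C l : P7)).comp (Phi m : P7 →+* Polynomial P7)
      = (robertsRho m l : P7 →+* P7) := by
    apply MvPolynomial.ringHom_ext
    · intro a
      simp [Phi, robertsRho]
    · intro i
      fin_cases i <;>
        simp [Phi, robertsRho, vec7_five, vec7_six] <;> ring
  exact congrArg (fun g : P7 →+* P7 => g p) h

lemma rho_zero (p : P7) (m : ℕ) : robertsRho m 0 p = p := by
  have h : (robertsRho m 0) = AlgHom.id ℂ P7 := by
    apply MvPolynomial.algHom_ext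
    intro i
    fin_cases i <;> simp [robertsRho, vec7_five, vec7_six]
  rw [h]; rfl

lemma coeff_zero_Phi (m : ℕ) (p : P7) : (Phi m p).coeff 0 = p := by
  have h0 : (C (0 : ℂ) : P7) = 0 := by simp
  rw [Polynomial.coeff_zero_eq_eval_zero, ← h0, eval_Phi, rho_zero]

lemma coeff_one_mul (p q : Polynomial P7) :
    (p * q).coeff 1 = p.coeff 0 * q.coeff 1 + p.coeff 1 * q.coeff 0 := by
  rw [Polynomial.coeff_mul, Finset.Nat.sum_antidiagonal_eq_sum_range_succ_mk]
  simp [Finset.sum_range_succ]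

/-- Extracting the linear (in `λ`) part of `Phi` is a derivation. -/
noncomputable def L (m : ℕ) : Derivation ℂ P7 P7 where
  toLinearMap := (Polynomial.lcoeff P7 1).restrictScalars ℂ ∘ₗ (Phi m).toLinearMap
  map_one_eq_zero' := by simp [Polynomial.coeff_one]
  leibniz' a b := by
    have h : ((Phi m) (a * b)).coeff 1
        = a * ((Phi m b).coeff 1) + b * ((Phi m a).coeff 1) := by
      rw [map_mul, coeff_one_mul, coeff_zero_Phi, coeff_zero_Phi]; ring
    show ((Phi m) (a * b)).coeff 1 = a • ((Phi m b).coeff 1) + b • ((Phi m a).coeff 1)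
    rw [smul_eq_mul, smul_eq_mul]; exact h

lemma Lphi_apply (m : ℕ) (p : P7) : L m p = ((Phi m) p).coeff 1 := rfl

/-- The LND `D = x^{m+1} ∂_s + y^{m+1} ∂_t + z^{m+1} ∂_u + (xyz)^m ∂_v`. -/
noncomputable def D (m : ℕ) : Derivation ℂ P7 P7 :=
  (X 0 ^ (m + 1) : P7) • (pderiv 3 : Derivation ℂ P7 P7) + (X 1 ^ (m + 1) : P7) • pderiv 4 +
    (X 2 ^ (m + 1) : P7) • pderiv 5 + (X 0 ^ m * X 1 ^ m * X 2 ^ m : P7) • pderiv 6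

lemma coeff1_CXC (a b : P7) : (Polynomial.C a + Polynomial.X * Polynomial.C b).coeff 1 = b := by
  rw [Polynomial.coeff_add, Polynomial.coeff_C, show (1:ℕ) = 0 + 1 from rfl,
    Polynomial.coeff_X_mul, Polynomial.coeff_C_zero]
  simp

lemma L_eq_D (m : ℕ) : L m = D m := by
  apply MvPolynomial.derivation_ext
  intro i
  rw [Lphi_apply]
  fin_cases i <;>
    simp [Phi, D, vec7_five, vec7_six, Derivation.add_apply, Derivation.smul_apply,
      pderiv_X_self, pderiv_X_of_ne, coeff1_CXC, Polynomial.coeff_C] <;>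
    simp [Polynomial.coeff_zero_eq_eval_zero]

lemma D_f_eq_zero (m : ℕ) (f : P7) (hf : ∀ l : ℂ, robertsRho m l f = f) :
    D m f = 0 := by
  rw [← L_eq_D, Lphi_apply]
  set q : Polynomial P7 := Phi m f - Polynomial.C f with hq
  have hql : ∀ l : ℂ, q.eval (C l) = 0 := by
    intro l
    simp [hq, eval_Phi m l f, hf l]
  have hco : ∀ pt : Fin 7 → ℂ, eval pt (q.coeff 1) = 0 := by
    intro pt
    have hmap : q.map (eval pt : P7 →+* ℂ) = 0 := by
      apply Polynomial.funext
      intro r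
      have : (q.map (eval pt : P7 →+* ℂ)).eval r = eval pt (q.eval (C r)) := by
        rw [Polynomial.eval_map]
        have hr : (eval pt : P7 →+* ℂ) (C r) = r := by simp
        conv_lhs => rw [← hr]
        rw [Polynomial.eval₂_at_apply]
      rw [this, hql r]
      simp
    have := congrArg (fun p : Polynomial ℂ => p.coeff 1) hmap
    simpa [Polynomial.coeff_map] using this
  have hcoeff : q.coeff 1 = 0 := by
    apply MvPolynomial.funext
    intro x
    simp [hco x]
  have : q.coeff 1 = (Phi m f).coeff 1 := by
    simp [hq, Polynomial.coeff_sub]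
  rw [← this, hcoeff]

lemma coeff_pderiv (i : Fin 7) (u : Fin 7 →₀ ℕ) (f : P7) :
    coeff u (pderiv i f) = ((u i : ℕ) + 1 : ℕ) * coeff (u + Finsupp.single i 1) f := by
  induction f using MvPolynomial.induction_on' with
  | monomial s a =>
    rw [pderiv_monomial, coeff_monomial, coeff_monomial]
    by_cases h : s = u + Finsupp.single i 1
    · subst h
      rw [if_pos (by rw [add_tsub_cancel_right]), if_pos rfl, Finsupp.add_apply,
        Finsupp.single_apply, if_pos rfl]
      push_cast
      ring
    · rw [if_neg h, mul_zero]
      by_cases h2 : s - Finsupp.single i 1 = u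
      · rw [if_pos h2]
        have hsi : s i = 0 := by
          by_contra hsi
          apply h
          have hle : Finsupp.single i 1 ≤ s :=
            Finsupp.single_le_iff.mpr (Nat.one_le_iff_ne_zero.mpr hsi)
          rw [← h2, tsub_add_cancel_of_le hle]
        simp [hsi]
      · rw [if_neg h2]
  | add p q hp hq =>
    simp only [map_add, coeff_add, hp, hq]
    ring

lemma coeff_term_eq (s w' : Fin 7 →₀ ℕ) (j : Fin 7) (f : P7) :
    coeff (s + w') (monomial s (1 : ℂ) * pderiv j f)
      = ((w' j : ℕ) + 1 : ℕ) * coeff (w' + Finsupp.single j 1) f := by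
  rw [coeff_monomial_mul, coeff_pderiv, one_mul]

lemma coeff_term_ne (s d : Fin 7 →₀ ℕ) (j : Fin 7) (f : P7) (h : ¬ s ≤ d) :
    coeff d (monomial s (1 : ℂ) * pderiv j f) = 0 := by
  rw [coeff_monomial_mul', if_neg h]

lemma not_le_of_apply_lt {s d : Fin 7 →₀ ℕ} (k : Fin 7) (h : d k < s k) : ¬ s ≤ d :=
  fun hle => absurd (Finsupp.le_def.mp hle k) (not_le.mpr h)

lemma triple_eq (m : ℕ) :
    (X 0 ^ m * X 1 ^ m * X 2 ^ m : P7)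
      = monomial (Finsupp.single 0 m + Finsupp.single 1 m + Finsupp.single 2 m) (1 : ℂ) := by
  rw [X_pow_eq_monomial, X_pow_eq_monomial, X_pow_eq_monomial, monomial_mul, monomial_mul,
    one_mul, one_mul]

lemma Df_expand (m : ℕ) (f : P7) :
    D m f = monomial (Finsupp.single 0 (m + 1)) (1 : ℂ) * pderiv 3 f
      + monomial (Finsupp.single 1 (m + 1)) (1 : ℂ) * pderiv 4 f
      + monomial (Finsupp.single 2 (m + 1)) (1 : ℂ) * pderiv 5 f
      + monomial (Finsupp.single 0 m + Finsupp.single 1 m + Finsupp.single 2 m) (1 : ℂ)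
          * pderiv 6 f := by
  rw [← X_pow_eq_monomial, ← X_pow_eq_monomial, ← X_pow_eq_monomial, ← triple_eq]
  simp [D, Derivation.add_apply, Derivation.smul_apply, smul_eq_mul]

/-- The key coefficient-extraction lemma: a `D`-invariant polynomial has no monomials
supported only on `s, t, u, v` except the constant. -/
lemma coeff_eq_zero (m : ℕ) (hm : 2 ≤ m) (f : P7) (hD : D m f = 0)
    (w : Fin 7 →₀ ℕ) (h0 : w 0 = 0) (h1 : w 1 = 0) (h2 : w 2 = 0) (hw : w ≠ 0) :
    coeff w f = 0 := by
  by_contra hc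
  have hcoeff : ∀ d : Fin 7 →₀ ℕ,
      coeff d (monomial (Finsupp.single 0 (m + 1)) (1 : ℂ) * pderiv 3 f)
      + coeff d (monomial (Finsupp.single 1 (m + 1)) (1 : ℂ) * pderiv 4 f)
      + coeff d (monomial (Finsupp.single 2 (m + 1)) (1 : ℂ) * pderiv 5 f)
      + coeff d (monomial (Finsupp.single 0 m + Finsupp.single 1 m + Finsupp.single 2 m) (1 : ℂ)
          * pderiv 6 f) = 0 := by
    intro d
    have := congrArg (coeff d) ((Df_expand m f).symm.trans hD)
    simpa [coeff_add] using this
  have hw3 : w 3 = 0 := by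
    by_contra h3
    have h3' : 1 ≤ w 3 := Nat.one_le_iff_ne_zero.mpr h3
    have hww : (w - Finsupp.single (3:Fin 7) 1) + Finsupp.single (3:Fin 7) 1 = w :=
      tsub_add_cancel_of_le (Finsupp.single_le_iff.mpr h3')
    have hwj : ((w - Finsupp.single (3:Fin 7) 1 : Fin 7 →₀ ℕ)) 3 + 1 = w 3 := by
      simp [Finsupp.tsub_apply, Finsupp.single_apply]
      omega
    have hn1 : ¬ Finsupp.single (1:Fin 7) (m + 1) ≤ Finsupp.single (0:Fin 7) (m + 1) + (w - Finsupp.single (3:Fin 7) 1) := by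
      intro hle
      have h := Finsupp.le_def.mp hle 1
      simp [Finsupp.add_apply, Finsupp.tsub_apply, Finsupp.single_apply, h1] at h <;> omega
    have hn2 : ¬ Finsupp.single (2:Fin 7) (m + 1) ≤ Finsupp.single (0:Fin 7) (m + 1) + (w - Finsupp.single (3:Fin 7) 1) := by
      intro hle
      have h := Finsupp.le_def.mp hle 2
      simp [Finsupp.add_apply, Finsupp.tsub_apply, Finsupp.single_apply, h2] at h <;> omega
    have hn3 : ¬ (Finsupp.single (0:Fin 7) m + Finsupp.single (1:Fin 7) m + Finsupp.single (2:Fin 7) m) ≤ Finsupp.single (0:Fin 7) (m + 1) + (w - Finsupp.single (3:Fin 7) 1) := by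
      intro hle
      have h := Finsupp.le_def.mp hle 1
      simp [Finsupp.add_apply, Finsupp.tsub_apply, Finsupp.single_apply, h1] at h <;> omega
    have hkey := hcoeff (Finsupp.single (0:Fin 7) (m + 1) + (w - Finsupp.single (3:Fin 7) 1))
    rw [coeff_term_ne _ _ _ _ hn1, coeff_term_ne _ _ _ _ hn2, coeff_term_ne _ _ _ _ hn3,
      coeff_term_eq, hwj, hww] at hkey
    simp only [add_zero, zero_add] at hkey
    rcases mul_eq_zero.mp hkey with h | h
    · exact h3 (by exact_mod_cast h)
    · exact hc h
  have hw4 : w 4 = 0 := by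
    by_contra h4
    have h4' : 1 ≤ w 4 := Nat.one_le_iff_ne_zero.mpr h4
    have hww : (w - Finsupp.single (4:Fin 7) 1) + Finsupp.single (4:Fin 7) 1 = w :=
      tsub_add_cancel_of_le (Finsupp.single_le_iff.mpr h4')
    have hwj : ((w - Finsupp.single (4:Fin 7) 1 : Fin 7 →₀ ℕ)) 4 + 1 = w 4 := by
      simp [Finsupp.tsub_apply, Finsupp.single_apply]
      omega
    have hn1 : ¬ Finsupp.single (0:Fin 7) (m + 1) ≤ Finsupp.single (1:Fin 7) (m + 1) + (w - Finsupp.single (4:Fin 7) 1) := by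
      intro hle
      have h := Finsupp.le_def.mp hle 0
      simp [Finsupp.add_apply, Finsupp.tsub_apply, Finsupp.single_apply, h0] at h <;> omega
    have hn2 : ¬ Finsupp.single (2:Fin 7) (m + 1) ≤ Finsupp.single (1:Fin 7) (m + 1) + (w - Finsupp.single (4:Fin 7) 1) := by
      intro hle
      have h := Finsupp.le_def.mp hle 2
      simp [Finsupp.add_apply, Finsupp.tsub_apply, Finsupp.single_apply, h2] at h <;> omega
    have hn3 : ¬ (Finsupp.single (0:Fin 7) m + Finsupp.single (1:Fin 7) m + Finsupp.single (2:Fin 7) m) ≤ Finsupp.single (1:Fin 7) (m + 1) + (w - Finsupp.single (4:Fin 7) 1) := by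
      intro hle
      have h := Finsupp.le_def.mp hle 0
      simp [Finsupp.add_apply, Finsupp.tsub_apply, Finsupp.single_apply, h0] at h <;> omega
    have hkey := hcoeff (Finsupp.single (1:Fin 7) (m + 1) + (w - Finsupp.single (4:Fin 7) 1))
    rw [coeff_term_ne _ _ _ _ hn1, coeff_term_ne _ _ _ _ hn2, coeff_term_ne _ _ _ _ hn3,
      coeff_term_eq, hwj, hww] at hkey
    simp only [add_zero, zero_add] at hkey
    rcases mul_eq_zero.mp hkey with h | h
    · exact h4 (by exact_mod_cast h)
    · exact hc h
  have hw5 : w 5 = 0 := by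
    by_contra h5
    have h5' : 1 ≤ w 5 := Nat.one_le_iff_ne_zero.mpr h5
    have hww : (w - Finsupp.single (5:Fin 7) 1) + Finsupp.single (5:Fin 7) 1 = w :=
      tsub_add_cancel_of_le (Finsupp.single_le_iff.mpr h5')
    have hwj : ((w - Finsupp.single (5:Fin 7) 1 : Fin 7 →₀ ℕ)) 5 + 1 = w 5 := by
      simp [Finsupp.tsub_apply, Finsupp.single_apply]
      omega
    have hn1 : ¬ Finsupp.single (0:Fin 7) (m + 1) ≤ Finsupp.single (2:Fin 7) (m + 1) + (w - Finsupp.single (5:Fin 7) 1) := by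
      intro hle
      have h := Finsupp.le_def.mp hle 0
      simp [Finsupp.add_apply, Finsupp.tsub_apply, Finsupp.single_apply, h0] at h <;> omega
    have hn2 : ¬ Finsupp.single (1:Fin 7) (m + 1) ≤ Finsupp.single (2:Fin 7) (m + 1) + (w - Finsupp.single (5:Fin 7) 1) := by
      intro hle
      have h := Finsupp.le_def.mp hle 1
      simp [Finsupp.add_apply, Finsupp.tsub_apply, Finsupp.single_apply, h1] at h <;> omega
    have hn3 : ¬ (Finsupp.single (0:Fin 7) m + Finsupp.single (1:Fin 7) m + Finsupp.single (2:Fin 7) m) ≤ Finsupp.single (2:Fin 7) (m + 1) + (w - Finsupp.single (5:Fin 7) 1) := by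
      intro hle
      have h := Finsupp.le_def.mp hle 0
      simp [Finsupp.add_apply, Finsupp.tsub_apply, Finsupp.single_apply, h0] at h <;> omega
    have hkey := hcoeff (Finsupp.single (2:Fin 7) (m + 1) + (w - Finsupp.single (5:Fin 7) 1))
    rw [coeff_term_ne _ _ _ _ hn1, coeff_term_ne _ _ _ _ hn2, coeff_term_ne _ _ _ _ hn3,
      coeff_term_eq, hwj, hww] at hkey
    simp only [add_zero, zero_add] at hkey
    rcases mul_eq_zero.mp hkey with h | h
    · exact h5 (by exact_mod_cast h)
    · exact hc h
  have hw6 : w 6 = 0 := by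
    by_contra h6
    have h6' : 1 ≤ w 6 := Nat.one_le_iff_ne_zero.mpr h6
    have hww : (w - Finsupp.single (6:Fin 7) 1) + Finsupp.single (6:Fin 7) 1 = w :=
      tsub_add_cancel_of_le (Finsupp.single_le_iff.mpr h6')
    have hwj : ((w - Finsupp.single (6:Fin 7) 1 : Fin 7 →₀ ℕ)) 6 + 1 = w 6 := by
      simp [Finsupp.tsub_apply, Finsupp.single_apply]
      omega
    have hn1 : ¬ Finsupp.single (0:Fin 7) (m + 1) ≤ (Finsupp.single (0:Fin 7) m + Finsupp.single (1:Fin 7) m + Finsupp.single (2:Fin 7) m) + (w - Finsupp.single (6:Fin 7) 1) := by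
      intro hle
      have h := Finsupp.le_def.mp hle 0
      simp [Finsupp.add_apply, Finsupp.tsub_apply, Finsupp.single_apply, h0] at h <;> omega
    have hn2 : ¬ Finsupp.single (1:Fin 7) (m + 1) ≤ (Finsupp.single (0:Fin 7) m + Finsupp.single (1:Fin 7) m + Finsupp.single (2:Fin 7) m) + (w - Finsupp.single (6:Fin 7) 1) := by
      intro hle
      have h := Finsupp.le_def.mp hle 1
      simp [Finsupp.add_apply, Finsupp.tsub_apply, Finsupp.single_apply, h1] at h <;> omega
    have hn3 : ¬ Finsupp.single (2:Fin 7) (m + 1) ≤ (Finsupp.single (0:Fin 7) m + Finsupp.single (1:Fin 7) m + Finsupp.single (2:Fin 7) m) + (w - Finsupp.single (6:Fin 7) 1) := by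
      intro hle
      have h := Finsupp.le_def.mp hle 2
      simp [Finsupp.add_apply, Finsupp.tsub_apply, Finsupp.single_apply, h2] at h <;> omega
    have hkey := hcoeff ((Finsupp.single (0:Fin 7) m + Finsupp.single (1:Fin 7) m + Finsupp.single (2:Fin 7) m) + (w - Finsupp.single (6:Fin 7) 1))
    rw [coeff_term_ne _ _ _ _ hn1, coeff_term_ne _ _ _ _ hn2, coeff_term_ne _ _ _ _ hn3,
      coeff_term_eq, hwj, hww] at hkey
    simp only [add_zero, zero_add] at hkey
    rcases mul_eq_zero.mp hkey with h | h
    · exact h6 (by exact_mod_cast h)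
    · exact hc h
  apply hw
  ext j
  fin_cases j
  · simpa using h0
  · simpa using h1
  · simpa using h2
  · simpa using hw3
  · simpa using hw4
  · simpa using hw5
  · simpa using hw6

end RobertsAux

/-- **Roberts' lemma:** if `f` is invariant under all `ρ_λ` (for fixed `m ≥ 2`), then
substituting `x = y = z = 0` into `f` yields a constant polynomial; equivalently every
non-constant monomial of `f` is divisible by `x`, `y` or `z`. -/
theorem roberts_invariants_vanish_modulo_xyz (m : ℕ) (hm : 2 ≤ m)
    (f : MvPolynomial (Fin 7) ℂ) (hf : ∀ l : ℂ, robertsRho m l f = f) :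
    ∃ c : ℂ,
      aeval (fun i : Fin 7 => if i = 0 ∨ i = 1 ∨ i = 2 then 0 else X i) f = C c := by
  classical
  have hD := RobertsAux.D_f_eq_zero m f hf
  refine ⟨coeff 0 f, ?_⟩
  rw [aeval_def, eval₂_eq]
  rw [Finset.sum_eq_single (0 : Fin 7 →₀ ℕ)]
  · simp
  · intro d hd hd0
    by_cases hxyz : d 0 = 0 ∧ d 1 = 0 ∧ d 2 = 0
    · exfalso
      exact (mem_support_iff.mp hd)
        (RobertsAux.coeff_eq_zero m hm f hD d hxyz.1 hxyz.2.1 hxyz.2.2 hd0)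
    · have : ∃ j : Fin 7, (j = 0 ∨ j = 1 ∨ j = 2) ∧ d j ≠ 0 := by
        by_contra hcon
        push_neg at hcon
        exact hxyz ⟨hcon 0 (Or.inl rfl), hcon 1 (Or.inr (Or.inl rfl)),
          hcon 2 (Or.inr (Or.inr rfl))⟩
      obtain ⟨j, hj, hdj⟩ := this
      have hmem : j ∈ d.support := Finsupp.mem_support_iff.mpr hdj
      have hzero : (if j = 0 ∨ j = 1 ∨ j = 2 then (0 : MvPolynomial (Fin 7) ℂ) else X j) ^ d j
          = 0 := by
        rw [if_pos hj]; exact zero_pow hdj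
      exact mul_eq_zero_of_right _ (Finset.prod_eq_zero hmem hzero)
  · intro h
    rw [notMem_support_iff.mp h]
    simp
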